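/- Let f : A → B be an F-equivalence of F_p-algebras, let A → A' be any homomorphism of F_p-algebras, and let f' : A' → A' ⊗_A B be the base change of f. Then f' is an F-equivalence. -/

import Mathlib

open Algebra.TensorProduct in
theorem stmt3_aux_inj (p : ℕ) [Fact p.Prime] (A A' B : Type*) [CommRing A] [CommRing A']
    [CommRing B] [CharP A p] [CharP A' p] [CharP B p] [Algebra A A'] [Algebra A B]
    (hinj : ∀ x : A, algebraMap A B x = 0 → ∃ m : ℕ, x ^ p ^ m = 0)
    (hsurj : ∀ y : B, ∃ (m : ℕ) (x : A), algebraMap A B x = y ^ p ^ m)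
    (x : A')
    (hx : (Algebra.TensorProduct.includeLeftRingHom : A' →+* TensorProduct A A' B) x = 0) :
    ∃ m : ℕ, x ^ p ^ m = 0 := by
  classical
  -- the Frobenius direct limit ("perfection") of `A'`
  set G : ℕ → Type _ := fun _ => A' with hG
  set F : ∀ i j : ℕ, i ≤ j → A' →+* A' := fun i j _ => iterateFrobenius A' p (j - i) with hF
  haveI : DirectedSystem G fun i j h => F i j h := by
    constructor
    · intro i z
      simp [hF, iterateFrobenius_def]
    · intro k j i hij hjk z
      simp only [hF, iterateFrobenius_def, ← pow_mul, ← pow_add]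
      congr 2
      omega
  set D := Ring.DirectLimit G (fun i j h => F i j h) with hD
  set of : ∀ i : ℕ, A' →+* D := fun i => Ring.DirectLimit.of G (fun i j h => F i j h) i with hof
  have hof_f : ∀ (i : ℕ) (k : ℕ) (z : A'), of (i + k) (z ^ p ^ k) = of i z := by
    intro i k z
    have := Ring.DirectLimit.of_f (G := G) (f := fun i j h => F i j h)
      (i := i) (j := i + k) (Nat.le_add_right i k) z
    simpa [hF, iterateFrobenius_def] using this
  -- well-definedness of the map `B → D`
  have wd : ∀ (b : B) (m₁ m₂ : ℕ) (a₁ a₂ : A),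
      algebraMap A B a₁ = b ^ p ^ m₁ → algebraMap A B a₂ = b ^ p ^ m₂ →
      of m₁ (algebraMap A A' a₁) = of m₂ (algebraMap A A' a₂) := by
    intro b m₁ m₂ a₁ a₂ h₁ h₂
    have hker : algebraMap A B (a₁ ^ p ^ m₂ - a₂ ^ p ^ m₁) = 0 := by
      rw [map_sub, map_pow, map_pow, h₁, h₂, ← pow_mul, ← pow_mul, ← pow_add, ← pow_add,
        Nat.add_comm m₁ m₂, sub_self]
    obtain ⟨k, hk⟩ := hinj _ hker
    rw [sub_pow_char_pow, sub_eq_zero, ← pow_mul, ← pow_mul, ← pow_add, ← pow_add] at hk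
    have e₁ : of m₁ (algebraMap A A' a₁) = of (m₁ + (m₂ + k))
        (algebraMap A A' a₁ ^ p ^ (m₂ + k)) := (hof_f _ _ _).symm
    have e₂ : of m₂ (algebraMap A A' a₂) = of (m₂ + (m₁ + k))
        (algebraMap A A' a₂ ^ p ^ (m₁ + k)) := (hof_f _ _ _).symm
    rw [e₁, e₂, ← map_pow, ← map_pow, hk, show m₁ + (m₂ + k) = m₂ + (m₁ + k) by omega]
  -- the map `B → D`
  set hfun : B → D := fun b =>
    of (hsurj b).choose (algebraMap A A' (hsurj b).choose_spec.choose) with hhfun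
  have hspec : ∀ b : B, algebraMap A B (hsurj b).choose_spec.choose = b ^ p ^ (hsurj b).choose :=
    fun b => (hsurj b).choose_spec.choose_spec
  have hfun_eq : ∀ (b : B) (m : ℕ) (a : A), algebraMap A B a = b ^ p ^ m →
      hfun b = of m (algebraMap A A' a) := fun b m a h => wd b _ m _ a (hspec b) h
  have hmap_one : hfun 1 = 1 := by
    rw [hfun_eq 1 0 1 (by simp), map_one, map_one]
  have hmap_zero : hfun 0 = 0 := by
    rw [hfun_eq 0 0 0 (by simp), map_zero, map_zero]
  have hmap_mul : ∀ b₁ b₂ : B, hfun (b₁ * b₂) = hfun b₁ * hfun b₂ := by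
    intro b₁ b₂
    obtain ⟨m₁, a₁, h₁⟩ := hsurj b₁
    obtain ⟨m₂, a₂, h₂⟩ := hsurj b₂
    have h : algebraMap A B (a₁ ^ p ^ m₂ * a₂ ^ p ^ m₁) = (b₁ * b₂) ^ p ^ (m₁ + m₂) := by
      rw [map_mul, map_pow, map_pow, h₁, h₂, mul_pow, ← pow_mul, ← pow_mul, ← pow_add, ← pow_add,
        Nat.add_comm m₂ m₁]
    rw [hfun_eq _ _ _ h, hfun_eq _ _ _ h₁, hfun_eq _ _ _ h₂, map_mul, map_pow, map_pow]
    rw [show m₁ + m₂ = m₁ + m₂ from rfl]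
    rw [map_mul]
    rw [show of (m₁ + m₂) (algebraMap A A' a₁ ^ p ^ m₂) = of m₁ (algebraMap A A' a₁) from
      hof_f m₁ m₂ _, show of (m₁ + m₂) (algebraMap A A' a₂ ^ p ^ m₁) = of m₂ (algebraMap A A' a₂)
      from Nat.add_comm m₁ m₂ ▸ hof_f m₂ m₁ _]
  have hmap_add : ∀ b₁ b₂ : B, hfun (b₁ + b₂) = hfun b₁ + hfun b₂ := by
    intro b₁ b₂
    obtain ⟨m₁, a₁, h₁⟩ := hsurj b₁
    obtain ⟨m₂, a₂, h₂⟩ := hsurj b₂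
    have h : algebraMap A B (a₁ ^ p ^ m₂ + a₂ ^ p ^ m₁) = (b₁ + b₂) ^ p ^ (m₁ + m₂) := by
      rw [map_add, map_pow, map_pow, h₁, h₂, add_pow_char_pow, ← pow_mul, ← pow_mul, ← pow_add,
        ← pow_add, Nat.add_comm m₂ m₁]
    rw [hfun_eq _ _ _ h, hfun_eq _ _ _ h₁, hfun_eq _ _ _ h₂, map_add, map_pow, map_pow, map_add]
    rw [show of (m₁ + m₂) (algebraMap A A' a₁ ^ p ^ m₂) = of m₁ (algebraMap A A' a₁) from
      hof_f m₁ m₂ _, show of (m₁ + m₂) (algebraMap A A' a₂ ^ p ^ m₁) = of m₂ (algebraMap A A' a₂)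
      from Nat.add_comm m₁ m₂ ▸ hof_f m₂ m₁ _]
  set hB : B →+* D :=
    { toFun := hfun
      map_one' := hmap_one
      map_mul' := hmap_mul
      map_zero' := hmap_zero
      map_add' := hmap_add } with hhB
  letI : Algebra A D := ((of 0).comp (algebraMap A A')).toAlgebra
  have halgD : ∀ a : A, algebraMap A D a = of 0 (algebraMap A A' a) := fun _ => rfl
  set jA : A' →ₐ[A] D := { of 0 with commutes' := fun a => rfl } with hjA
  have hcommB : ∀ a : A, hB (algebraMap A B a) = algebraMap A D a := by
    intro a
    show hfun (algebraMap A B a) = algebraMap A D a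
    rw [hfun_eq (algebraMap A B a) 0 a (by simp), halgD]
  set jB : B →ₐ[A] D := { hB with commutes' := hcommB } with hjB
  set H : TensorProduct A A' B →ₐ[A] D :=
    Algebra.TensorProduct.lift jA jB (fun _ _ => Commute.all _ _) with hH
  have hx0 : of 0 x = 0 := by
    have : H ((Algebra.TensorProduct.includeLeftRingHom :
        A' →+* TensorProduct A A' B) x) = of 0 x := by
      show H (x ⊗ₜ[A] 1) = of 0 x
      rw [Algebra.TensorProduct.lift_tmul, map_one, mul_one]
      rfl
    rw [hx, map_zero] at this
    exact this.symm
  obtain ⟨j, hij, hj⟩ := Ring.DirectLimit.of.zero_exact hx0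
  refine ⟨j, ?_⟩
  have hj' : (iterateFrobenius A' p (j - 0)) x = 0 := hj
  simpa [hF, iterateFrobenius_def] using hj'

/-- `F`-equivalence is preserved by base change: if the structure map `A → B` is an
`F`-equivalence, then so is `A' → A' ⊗[A] B`, `x ↦ x ⊗ 1`. -/
theorem stmt3 (p : ℕ) [Fact p.Prime] (A A' B : Type*) [CommRing A] [CommRing A'] [CommRing B]
    [CharP A p] [Algebra A A'] [Algebra A B]
    (hinj : ∀ x : A, algebraMap A B x = 0 → ∃ m : ℕ, x ^ p ^ m = 0)
    (hsurj : ∀ y : B, ∃ (m : ℕ) (x : A), algebraMap A B x = y ^ p ^ m) :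
    (∀ x : A', (Algebra.TensorProduct.includeLeftRingHom : A' →+* TensorProduct A A' B) x = 0 →
      ∃ m : ℕ, x ^ p ^ m = 0) ∧
    (∀ y : TensorProduct A A' B, ∃ (m : ℕ) (x : A'),
      (Algebra.TensorProduct.includeLeftRingHom : A' →+* TensorProduct A A' B) x = y ^ p ^ m) := by
  have hp : p.Prime := Fact.out
  constructor
  · -- F-injectivity
    rcases subsingleton_or_nontrivial A' with hA' | hA'
    · intro x _; exact ⟨0, Subsingleton.elim _ _⟩
    · haveI : CharP A' p := (CharP.charP_iff_prime_eq_zero hp).2 (by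
        rw [show ((p : ℕ) : A') = algebraMap A A' (p : ℕ) by rw [map_natCast],
          CharP.cast_eq_zero, map_zero])
      haveI : Nontrivial B := by
        rcases subsingleton_or_nontrivial B with hB | hB
        · exfalso
          obtain ⟨m, hm⟩ := hinj 1 (Subsingleton.elim _ _)
          rw [one_pow] at hm
          have : (1 : A') = 0 := by
            rw [← map_one (algebraMap A A'), hm, map_zero]
          exact one_ne_zero this
        · exact hB
      haveI : CharP B p := (CharP.charP_iff_prime_eq_zero hp).2 (by
        rw [show ((p : ℕ) : B) = algebraMap A B (p : ℕ) by rw [map_natCast],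
          CharP.cast_eq_zero, map_zero])
      exact stmt3_aux_inj p A A' B hinj hsurj
  · -- F-surjectivity
    rcases subsingleton_or_nontrivial (TensorProduct A A' B) with hT | hT
    · intro y; exact ⟨0, 0, Subsingleton.elim _ _⟩
    · haveI : CharP (TensorProduct A A' B) p := (CharP.charP_iff_prime_eq_zero hp).2 (by
        rw [show ((p : ℕ) : TensorProduct A A' B) =
          (Algebra.TensorProduct.includeLeftRingHom : A' →+* TensorProduct A A' B)
            (algebraMap A A' (p : ℕ)) by rw [map_natCast, map_natCast],
          CharP.cast_eq_zero, map_zero, map_zero])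
      intro y
      induction y using TensorProduct.induction_on with
      | zero => exact ⟨0, 0, by simp⟩
      | tmul a' b =>
        obtain ⟨m, a, ha⟩ := hsurj b
        refine ⟨m, a' ^ p ^ m * algebraMap A A' a, ?_⟩
        rw [Algebra.TensorProduct.tmul_pow]
        show (a' ^ p ^ m * algebraMap A A' a) ⊗ₜ[A] (1 : B) = (a' ^ p ^ m) ⊗ₜ[A] (b ^ p ^ m)
        calc (a' ^ p ^ m * algebraMap A A' a) ⊗ₜ[A] (1 : B)
            = (a • a' ^ p ^ m) ⊗ₜ[A] (1 : B) := by rw [Algebra.smul_def, mul_comm]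
          _ = (a' ^ p ^ m) ⊗ₜ[A] (a • (1 : B)) := TensorProduct.smul_tmul _ _ _
          _ = (a' ^ p ^ m) ⊗ₜ[A] (b ^ p ^ m) := by rw [Algebra.smul_def, mul_one, ha]
      | add y₁ y₂ ih₁ ih₂ =>
        obtain ⟨m₁, x₁, h₁⟩ := ih₁
        obtain ⟨m₂, x₂, h₂⟩ := ih₂
        refine ⟨m₁ + m₂, x₁ ^ p ^ m₂ + x₂ ^ p ^ m₁, ?_⟩
        rw [map_add, map_pow, map_pow, h₁, h₂, add_pow_char_pow, ← pow_mul, ← pow_mul,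
          ← pow_add, ← pow_add, Nat.add_comm m₂ m₁]
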